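/- For every real number x and every angle θ with 0 < θ < π, one has Im Li₂(e^{x+iθ}) − Im Li₂(e^{-x+iθ}) = (π − θ)·x. -/

import Mathlib

open Real

/-- The dilogarithm, defined by `Li₂(z) = ∫ t in 0..1, -log(1 - t z)/t dt`
(principal branch of the complex logarithm). -/
noncomputable def Li2 (z : ℂ) : ℂ :=
  ∫ t in (0:ℝ)..1, -Complex.log (1 - (t : ℂ) * z) / (t : ℂ)

namespace Li2Aux

noncomputable def w (θ : ℝ) : ℂ := Complex.exp ((θ : ℂ) * Complex.I)

noncomputable def f (θ : ℝ) (u : ℝ) : ℂ := -Complex.log (1 - (u : ℂ) * w θ) / (u : ℂ)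

noncomputable def g (θ : ℝ) (u : ℝ) : ℂ := if u = 0 then w θ else f θ u

noncomputable def G (θ : ℝ) (r : ℝ) : ℂ := ∫ u in (0:ℝ)..r, g θ u

lemma im_one_sub_mul (θ u : ℝ) : (1 - (u : ℂ) * w θ).im = -(u * Real.sin θ) := by
  simp [w, Complex.exp_mul_I, Complex.sub_im, Complex.mul_im, Complex.cos_ofReal_im,
    Complex.sin_ofReal_re, Complex.sin_ofReal_im, Complex.cos_ofReal_re]

lemma slit (θ : ℝ) (hs : Real.sin θ ≠ 0) {u : ℝ} (hu : u ≠ 0) :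
    1 - (u : ℂ) * w θ ∈ Complex.slitPlane := by
  rw [Complex.mem_slitPlane_iff]
  right
  rw [im_one_sub_mul]
  simpa using mul_ne_zero hu hs

lemma continuous_g (θ : ℝ) (hs : Real.sin θ ≠ 0) : Continuous (g θ) := by
  rw [continuous_iff_continuousAt]
  intro u
  rcases eq_or_ne u 0 with rfl | hu
  · -- continuity at 0 via the derivative of `u ↦ -log (1 - u * w θ)` at 0
    have hlog : HasDerivAt (fun z : ℂ => -Complex.log (1 - z)) 1 0 := by
      have h1 : HasDerivAt (fun z : ℂ => 1 - z) (-1) 0 := by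
        simpa using (hasDerivAt_id (0:ℂ)).const_sub 1
      have h2 : HasDerivAt Complex.log 1 ((fun z : ℂ => 1 - z) 0) := by
        simpa using Complex.hasDerivAt_log
          (by simp [Complex.mem_slitPlane_iff] : (1:ℂ) ∈ Complex.slitPlane)
      simpa [Function.comp_def, Pi.neg_def] using (h2.comp 0 h1).neg
    have hlog2 : HasDerivAt (fun z : ℂ => -Complex.log (1 - z * w θ)) (w θ) 0 := by
      have h1 : HasDerivAt (fun z : ℂ => 1 - z * w θ) (-w θ) 0 := by
        simpa using ((hasDerivAt_id (0:ℂ)).mul_const (w θ)).const_sub 1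
      have h2 : HasDerivAt Complex.log 1 ((fun z : ℂ => 1 - z * w θ) 0) := by
        simpa using Complex.hasDerivAt_log
          (by simp [Complex.mem_slitPlane_iff] : (1:ℂ) ∈ Complex.slitPlane)
      simpa [Function.comp_def, Pi.neg_def] using (h2.comp 0 h1).neg
    have hh : HasDerivAt (fun u : ℝ => -Complex.log (1 - (u : ℂ) * w θ)) (w θ) 0 := by
      have := hlog2.comp_ofReal (z := 0)
      simpa using this
    have hslope := hasDerivAt_iff_tendsto_slope.mp hh
    have htend : Filter.Tendsto (g θ) (nhdsWithin 0 {(0:ℝ)}ᶜ) (nhds (w θ)) := by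
      refine hslope.congr' ?_
      filter_upwards [self_mem_nhdsWithin] with v hv
      have hv' : v ≠ 0 := hv
      simp [slope, g, f, hv', div_eq_inv_mul, Complex.ofReal_inv]
    have hg0 : g θ 0 = w θ := by simp [g]
    rw [← continuousWithinAt_compl_self]
    unfold ContinuousWithinAt
    rw [hg0]
    exact htend
  · -- continuity at u ≠ 0
    have h1 : ContinuousAt (fun u : ℝ => 1 - (u : ℂ) * w θ) u := by fun_prop
    have h2 : ContinuousAt Complex.log (1 - (u : ℂ) * w θ) :=
      continuousAt_clog (slit θ hs hu)
    have h3 : ContinuousAt (fun u : ℝ => -Complex.log (1 - (u : ℂ) * w θ)) u := by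
      have : ContinuousAt (fun u : ℝ => Complex.log (1 - (u : ℂ) * w θ)) u :=
        h2.tendsto.comp h1
      exact this.neg
    have hf : ContinuousAt (f θ) u :=
      ContinuousAt.div h3 (Complex.continuous_ofReal.continuousAt)
        (by exact_mod_cast hu)
    have heq : g θ =ᶠ[nhds u] f θ := by
      filter_upwards [isOpen_compl_singleton.mem_nhds
        (by simpa using hu : u ∈ ({(0:ℝ)}ᶜ : Set ℝ))] with v hv
      have hv' : v ≠ 0 := hv
      simp [g, hv']
    exact hf.congr heq.symm

lemma hasDerivAt_G (θ : ℝ) (hs : Real.sin θ ≠ 0) (r : ℝ) : HasDerivAt (G θ) (g θ r) r := by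
  have hc := continuous_g θ hs
  exact intervalIntegral.integral_hasDerivAt_right (hc.intervalIntegrable _ _)
    (hc.stronglyMeasurable.stronglyMeasurableAtFilter) hc.continuousAt

lemma Li2_eq (θ : ℝ) (hs : Real.sin θ ≠ 0) (c : ℝ) :
    Li2 (Complex.exp ((c : ℂ) + (θ : ℂ) * Complex.I)) = G θ (Real.exp c) := by
  have hec : (0:ℝ) < Real.exp c := Real.exp_pos c
  have hexp : Complex.exp ((c : ℂ) + (θ : ℂ) * Complex.I) = (Real.exp c : ℂ) * w θ := by
    rw [Complex.exp_add, w, Complex.ofReal_exp]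
  have key : ∀ t : ℝ,
      -Complex.log (1 - (t : ℂ) * Complex.exp ((c : ℂ) + (θ : ℂ) * Complex.I)) / (t : ℂ)
      = (Real.exp c : ℝ) • f θ (t * Real.exp c) := by
    intro t
    rw [hexp]
    rcases eq_or_ne t 0 with rfl | ht
    · simp [f]
    · have ht' : (t : ℂ) ≠ 0 := by exact_mod_cast ht
      have he' : ((Real.exp c : ℝ) : ℂ) ≠ 0 := by exact_mod_cast hec.ne'
      simp only [f, Complex.real_smul, Complex.ofReal_mul, ← mul_assoc]
      field_simp
  have h1 : Li2 (Complex.exp ((c : ℂ) + (θ : ℂ) * Complex.I))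
      = ∫ t in (0:ℝ)..1, (Real.exp c : ℝ) • f θ (t * Real.exp c) := by
    unfold Li2
    exact intervalIntegral.integral_congr (fun t _ => key t)
  rw [h1, intervalIntegral.integral_smul,
    intervalIntegral.integral_comp_mul_right (f θ) (ne_of_gt hec)]
  rw [smul_smul, mul_inv_cancel₀ (ne_of_gt hec), one_smul, zero_mul, one_mul]
  unfold G
  apply intervalIntegral.integral_congr_ae
  have hae : ∀ᵐ u : ℝ, u ≠ 0 := by
    rw [Filter.eventually_iff, MeasureTheory.mem_ae_iff]
    simpa using MeasureTheory.measure_singleton (0:ℝ)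
  filter_upwards [hae] with u hu _
  simp [g, hu]

lemma arg_add (θ : ℝ) (hθ0 : 0 < θ) (hθπ : θ < π) {a : ℝ} (ha : 0 < a) :
    Complex.arg (1 - (a : ℂ) * w θ) + Complex.arg (1 - ((a⁻¹ : ℝ) : ℂ) * w θ) = θ - π := by
  have hs : 0 < Real.sin θ := Real.sin_pos_of_pos_of_lt_pi hθ0 hθπ
  have hπ : (0:ℝ) < π := Real.pi_pos
  have ha' : 0 < a⁻¹ := inv_pos.mpr ha
  have hui : (1 - (a : ℂ) * w θ).im < 0 := by rw [im_one_sub_mul]; nlinarith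
  have hvi : (1 - ((a⁻¹ : ℝ) : ℂ) * w θ).im < 0 := by rw [im_one_sub_mul]; nlinarith
  have hu0 : (1 - (a : ℂ) * w θ) ≠ 0 := fun h => by rw [h] at hui; simp at hui
  have hv0 : (1 - ((a⁻¹ : ℝ) : ℂ) * w θ) ≠ 0 := fun h => by rw [h] at hvi; simp at hvi
  have hcos : Real.cos θ < 1 := by
    rcases lt_or_eq_of_le (Real.cos_le_one θ) with h | h
    · exact h
    · exfalso; have := Real.sin_sq_add_cos_sq θ; nlinarith
  have h2 : 2 ≤ a + a⁻¹ := by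
    have h := sq_nonneg (a - 1)
    have h' : a * (a + a⁻¹) = a * a + 1 := by field_simp
    nlinarith
  have hc : 0 < a + a⁻¹ - 2 * Real.cos θ := by nlinarith
  set c : ℝ := a + a⁻¹ - 2 * Real.cos θ with hcdef
  have hwinv : Complex.exp (((-θ : ℝ) : ℂ) * Complex.I) * w θ = 1 := by
    rw [w, ← Complex.exp_add]
    push_cast
    ring_nf
    exact Complex.exp_zero
  have hcosw : w θ + Complex.exp (((-θ : ℝ) : ℂ) * Complex.I) = 2 * ((Real.cos θ : ℝ) : ℂ) := by
    rw [w, Complex.exp_mul_I, Complex.exp_mul_I]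
    push_cast
    simp [Complex.cos_neg, Complex.sin_neg]
    ring
  have ha0 : (a : ℂ) ≠ 0 := by exact_mod_cast ha.ne'
  have hainv : (a : ℂ) * ((a : ℂ))⁻¹ = 1 := mul_inv_cancel₀ ha0
  have hprod : (1 - (a : ℂ) * w θ) * (1 - ((a⁻¹ : ℝ) : ℂ) * w θ)
      = (c : ℂ) * Complex.exp (((θ - π : ℝ) : ℂ) * Complex.I) := by
    have hexpπ : Complex.exp (((θ - π : ℝ) : ℂ) * Complex.I) = -w θ := by
      rw [w]
      push_cast
      rw [sub_mul, Complex.exp_sub, Complex.exp_pi_mul_I]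
      ring
    rw [hexpπ, hcdef]
    push_cast at hcosw hwinv hainv ⊢
    linear_combination (w θ) * hcosw - hwinv + (w θ)^2 * hainv
  have harg : Complex.arg ((1 - (a : ℂ) * w θ) * (1 - ((a⁻¹ : ℝ) : ℂ) * w θ)) = θ - π := by
    rw [hprod]
    rw [Complex.arg_real_mul _ hc, Complex.exp_mul_I,
      Complex.arg_cos_add_sin_mul_I
        (Set.mem_Ioc.mpr ⟨by linarith, by linarith⟩ : (θ - π) ∈ Set.Ioc (-π) π)]
  have hang : ((Complex.arg (1 - (a : ℂ) * w θ) + Complex.arg (1 - ((a⁻¹ : ℝ) : ℂ) * w θ) : ℝ)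
      : Real.Angle) = ((θ - π : ℝ) : Real.Angle) := by
    rw [Real.Angle.coe_add, ← Complex.arg_mul_coe_angle hu0 hv0, harg]
  rw [Real.Angle.angle_eq_iff_two_pi_dvd_sub] at hang
  obtain ⟨k, hk⟩ := hang
  have hb1 : Complex.arg (1 - (a : ℂ) * w θ) < 0 := Complex.arg_neg_iff.mpr hui
  have hb2 : Complex.arg (1 - ((a⁻¹ : ℝ) : ℂ) * w θ) < 0 := Complex.arg_neg_iff.mpr hvi
  have hb3 := Complex.neg_pi_lt_arg (1 - (a : ℂ) * w θ)
  have hb4 := Complex.neg_pi_lt_arg (1 - ((a⁻¹ : ℝ) : ℂ) * w θ)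
  have hk0 : k = 0 := by
    have h1 : (k : ℝ) < 1 := by nlinarith
    have h2 : (-1 : ℝ) < k := by nlinarith
    have h1' : k < 1 := by exact_mod_cast h1
    have h2' : -1 < k := by exact_mod_cast h2
    omega
  rw [hk0] at hk
  push_cast at hk hb1 hb2 hb3 hb4 ⊢
  linarith

end Li2Aux

open Li2Aux in
theorem im_li2_sub_im_li2 (x θ : ℝ) (hθ0 : 0 < θ) (hθπ : θ < π) :
    (Li2 (Complex.exp ((x : ℂ) + (θ : ℂ) * Complex.I))).im -
      (Li2 (Complex.exp (-(x : ℂ) + (θ : ℂ) * Complex.I))).im = (π - θ) * x := by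
  have hs : Real.sin θ ≠ 0 := (Real.sin_pos_of_pos_of_lt_pi hθ0 hθπ).ne'
  set φ : ℝ → ℝ :=
    fun y => (G θ (Real.exp y)).im - (G θ (Real.exp (-y))).im - (π - θ) * y with hφ
  have hφd : ∀ y, HasDerivAt φ 0 y := by
    intro y
    have he : Real.exp y ≠ 0 := (Real.exp_pos y).ne'
    have he' : Real.exp (-y) ≠ 0 := (Real.exp_pos (-y)).ne'
    have h1 : HasDerivAt (fun y => G θ (Real.exp y)) (Real.exp y • g θ (Real.exp y)) y := by
      exact HasDerivAt.scomp (𝕜 := ℝ) (hg := hasDerivAt_G θ hs (Real.exp y)) (hh := Real.hasDerivAt_exp y)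
    have hexpneg : HasDerivAt (fun y : ℝ => Real.exp (-y)) (-Real.exp (-y)) y := by
      have := (Real.hasDerivAt_exp (-y)).comp y ((hasDerivAt_id y).neg)
      simpa [Function.comp_def] using this
    have h2 : HasDerivAt (fun y => G θ (Real.exp (-y)))
        ((-Real.exp (-y)) • g θ (Real.exp (-y))) y := by
      exact HasDerivAt.scomp (𝕜 := ℝ) (h := fun y : ℝ => Real.exp (-y)) (hg := hasDerivAt_G θ hs (Real.exp (-y))) (hh := hexpneg)
    have h1im := Complex.imCLM.hasFDerivAt.comp_hasDerivAt y h1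
    have h2im := Complex.imCLM.hasFDerivAt.comp_hasDerivAt y h2
    have h3 : HasDerivAt (fun y : ℝ => (π - θ) * y) (π - θ) y := by
      simpa using (hasDerivAt_id y).const_mul (π - θ)
    have hD := (h1im.sub h2im).sub h3
    have hval : (Real.exp y • g θ (Real.exp y)).im - ((-Real.exp (-y)) • g θ (Real.exp (-y))).im
        - (π - θ) = 0 := by
      have hne1 : ((Real.exp y : ℝ) : ℂ) ≠ 0 := by exact_mod_cast he
      have e1 : (Real.exp y : ℝ) • g θ (Real.exp y)
          = -Complex.log (1 - (Real.exp y : ℂ) * w θ) := by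
        simp only [g, if_neg he, f, Complex.real_smul]
        field_simp
      have hne2 : ((Real.exp (-y) : ℝ) : ℂ) ≠ 0 := by exact_mod_cast he'
      have e2 : ((-Real.exp (-y) : ℝ)) • g θ (Real.exp (-y))
          = Complex.log (1 - (Real.exp (-y) : ℂ) * w θ) := by
        simp only [g, if_neg he', f, Complex.real_smul]
        push_cast
        field_simp
      have hsum := arg_add θ hθ0 hθπ (Real.exp_pos y)
      rw [← Real.exp_neg] at hsum
      rw [e1, e2, Complex.neg_im, Complex.log_im, Complex.log_im]
      linarith
    have hD' : HasDerivAt φ ((Real.exp y • g θ (Real.exp y)).im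
        - ((-Real.exp (-y)) • g θ (Real.exp (-y))).im - (π - θ)) y := by
      rw [hφ]
      exact hD
    rw [hval] at hD'
    exact hD' 
  have hconst : φ x = φ 0 :=
    is_const_of_deriv_eq_zero (fun y => (hφd y).differentiableAt)
      (fun y => (hφd y).deriv) x 0
  have hφ0 : φ 0 = 0 := by simp [hφ]
  have hx0 : φ x = 0 := by rw [hconst, hφ0]
  have L1 : (Li2 (Complex.exp ((x : ℂ) + (θ : ℂ) * Complex.I))).im = (G θ (Real.exp x)).im := by
    rw [Li2_eq θ hs x]
  have L2 : (Li2 (Complex.exp (-(x : ℂ) + (θ : ℂ) * Complex.I))).im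
      = (G θ (Real.exp (-x))).im := by
    have : -(x : ℂ) = ((-x : ℝ) : ℂ) := by push_cast; ring
    rw [this, Li2_eq θ hs (-x)]
  rw [L1, L2]
  rw [hφ] at hx0
  simp only at hx0
  linarith
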